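/- arXiv:2504.02977 — 3 statements merged into one kernel-verified Lean document; each statement's English description precedes it below -/
import Mathlib

section
/- Let F be a direct zero forcing set for a finite simple graph G, fix a complete forcing sequence from F, ending with all vertices filled, in which every resulting forcing chain has length 0 or 1, and let W be the set of vertices that perform a force in this sequence. Then V(G)∖W is a direct zero forcing set for G of size |F|. -/
/-!  Common definitions: zero forcing (standard, loop, positive semidefinite),
zero-nonzero patterns, triangles, and related graph parameters. -/

variable {V : Type*}

/-- Standard zero forcing rule: with filled set `S`, the filled vertex `v` can force
its unique unfilled neighbor `u`. -/
def StdForce (G : SimpleGraph V) (S : Set V) (v u : V) : Prop :=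
  v ∈ S ∧ u ∉ S ∧ G.Adj v u ∧ ∀ w, G.Adj v w → w ∉ S → w = u

/-- Adjacency in the looping of `G` with loops at the vertices in `L`
(a vertex counts as its own neighbor iff it has a loop). -/
def LoopAdj (G : SimpleGraph V) (L : Set V) (v w : V) : Prop :=
  G.Adj v w ∨ (v = w ∧ v ∈ L)

/-- Loop zero forcing rule (the forcing vertex need not be filled): `v` can force `u`
if `u` is the only unfilled neighbor of `v` in the looping. -/
def LoopForce (G : SimpleGraph V) (L : Set V) (S : Set V) (v u : V) : Prop :=
  u ∉ S ∧ LoopAdj G L v u ∧ ∀ w, LoopAdj G L v w → w ∉ S → w = u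

/-- Positive semidefinite zero forcing rule: the filled vertex `v` can force the unfilled
vertex `u` if `u` is the only neighbor of `v` in the connected component of `u` of the
subgraph induced by the unfilled vertices. -/
def PsdForce (G : SimpleGraph V) (S : Set V) (v u : V) : Prop :=
  v ∈ S ∧ u ∉ S ∧ G.Adj v u ∧
    ∀ w, G.Adj v w → w ∉ S →
      Relation.ReflTransGen (fun a b => G.Adj a b ∧ a ∉ S ∧ b ∉ S) u w → w = u

/-- The vertices performing a force in a forcing sequence. -/
def sourcesOf (seq : List (V × V)) : Set V := {v | ∃ p ∈ seq, p.1 = v}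

/-- The vertices that get forced in a forcing sequence. -/
def targetsOf (seq : List (V × V)) : Set V := {u | ∃ p ∈ seq, p.2 = u}

/-- The filled set after performing all forces of `seq` starting from `F`. -/
def filledAfter (F : Set V) (seq : List (V × V)) : Set V := F ∪ targetsOf seq

/-- `ValidSeq rule seq F`: starting with `F` as the filled set, the sequence of forces
`seq` is permitted (each force in turn is allowed by `rule`, and each vertex forces
at most once). -/
def ValidSeq (rule : Set V → V → V → Prop) : List (V × V) → Set V → Prop
  | [], _ => True
  | (v, u) :: rest, F => rule F v u ∧ (∀ p ∈ rest, p.1 ≠ v) ∧ ValidSeq rule rest (insert u F)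

/-- `F` is a zero forcing set w.r.t. the forcing rule `rule`. -/
def IsZFSet (rule : Set V → V → V → Prop) (F : Set V) : Prop :=
  ∃ seq : List (V × V), ValidSeq rule seq F ∧ filledAfter F seq = Set.univ

/-- `F` is a zero forcing set (w.r.t. `rule`) from which `R` can be the set of vertices
that force: some (automatically complete) forcing sequence from `F` fills every vertex
and the set of vertices performing a force is exactly `R`. -/
def ForcesWith (rule : Set V → V → V → Prop) (F R : Set V) : Prop :=
  ∃ seq : List (V × V), ValidSeq rule seq F ∧ filledAfter F seq = Set.univ ∧
    sourcesOf seq = R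

/-- The zero forcing number w.r.t. a forcing rule. -/
noncomputable def Znum (rule : Set V → V → V → Prop) : ℕ :=
  sInf {n | ∃ F : Set V, IsZFSet rule F ∧ F.ncard = n}

/-- The (standard) zero forcing number `Z(G)`. -/
noncomputable def Z (G : SimpleGraph V) : ℕ := Znum (StdForce G)

/-- The zero forcing number of the looping of `G` with loops at `L`. -/
noncomputable def Zloop (G : SimpleGraph V) (L : Set V) : ℕ := Znum (LoopForce G L)

/-- The positive semidefinite zero forcing number `Z₊(G)`. -/
noncomputable def Zplus (G : SimpleGraph V) : ℕ := Znum (PsdForce G)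

/-- The enhanced zero forcing number `Ẑ(G)`: the maximum over all loopings of `G` of the
zero forcing number of the looping. -/
noncomputable def Zhat (G : SimpleGraph V) : ℕ := sSup {n | ∃ L : Set V, Zloop G L = n}

/-- `F` is a direct zero forcing set for `G`: some forcing sequence from `F` fills every
vertex and every vertex that performs a force belongs to `F`. -/
def IsDirectZFSet (G : SimpleGraph V) (F : Set V) : Prop :=
  ∃ seq : List (V × V), ValidSeq (StdForce G) seq F ∧ filledAfter F seq = Set.univ ∧
    sourcesOf seq ⊆ F

/-- The direct zero forcing number `Z_d(G)`. -/
noncomputable def Zd (G : SimpleGraph V) : ℕ :=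
  sInf {n | ∃ F : Set V, IsDirectZFSet G F ∧ F.ncard = n}

/-- A zero-nonzero pattern `Y` (entry `Y i j` means the `(i,j)` entry is `*`)
has a `k × k` submatrix that is a triangle. -/
def HasTriOfSize {ρ γ : Type*} (Y : ρ → γ → Prop) (k : ℕ) : Prop :=
  ∃ (r : Fin k → ρ) (c : Fin k → γ), Function.Injective r ∧ Function.Injective c ∧
    (∀ i, Y (r i) (c i)) ∧ ∀ i j : Fin k, i < j → ¬ Y (r i) (c j)

/-- The triangle number `tri(Y)` of a zero-nonzero pattern. -/
noncomputable def tri {ρ γ : Type*} (Y : ρ → γ → Prop) : ℕ := sSup {k | HasTriOfSize Y k}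

/-- Membership in `S_znz(G)`: off the diagonal, the pattern matches the adjacency of `G`. -/
def InSznz (G : SimpleGraph V) (A : V → V → Prop) : Prop :=
  ∀ i j : V, i ≠ j → (A i j ↔ G.Adj i j)

/-- The zero-nonzero pattern of the looping of `G` with loops at `L`. -/
def loopPattern (G : SimpleGraph V) (L : Set V) : V → V → Prop :=
  fun i j => (i = j ∧ i ∈ L) ∨ (i ≠ j ∧ G.Adj i j)

/-- The submatrix of the pattern `Y` with rows `R` and columns `C` is a triangle:
there are enumerations of `R` and `C` realizing a lower-triangular pattern with `*`
diagonal (in particular `|R| = |C|`). -/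
def SubIsTriangle {ρ γ : Type*} (Y : ρ → γ → Prop) (R : Finset ρ) (C : Finset γ) : Prop :=
  ∃ (k : ℕ) (r : Fin k → ρ) (c : Fin k → γ),
    Function.Injective r ∧ Function.Injective c ∧
    (∀ x : ρ, x ∈ R ↔ ∃ i, r i = x) ∧ (∀ y : γ, y ∈ C ↔ ∃ i, c i = y) ∧
    (∀ i, Y (r i) (c i)) ∧ ∀ i j : Fin k, i < j → ¬ Y (r i) (c j)

/-- `(R, C)` is a persistent triangle of `G`. -/
def PersistentTriangle (G : SimpleGraph V) (R C : Finset V) : Prop :=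
  ∀ A : V → V → Prop, InSznz G A → SubIsTriangle A R C

/-- `F` is a direct zero forcing set for `G` from which `R` can be the set of vertices
that force. -/
def DirectForcesWith (G : SimpleGraph V) (F R : Set V) : Prop :=
  ∃ seq : List (V × V), ValidSeq (StdForce G) seq F ∧ filledAfter F seq = Set.univ ∧
    sourcesOf seq = R ∧ R ⊆ F

/-- `(range r, range c)` is a partition of `G` according to the `m × n` pattern `Y`,
with labelings given by `r` and `c`. -/
def PartitionAccording (G : SimpleGraph V) {m n : ℕ} (Y : Fin m → Fin n → Prop)
    (r : Fin m → V) (c : Fin n → V) : Prop :=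
  Function.Injective r ∧ Function.Injective c ∧ (∀ i j, r i ≠ c j) ∧
    (∀ v : V, (∃ i, r i = v) ∨ (∃ j, c j = v)) ∧
    ∀ i j, G.Adj (r i) (c j) ↔ Y i j

/-- `F` is a zero forcing set for `G` that forces from `V1` to `V2`. -/
def ForcesFromTo (G : SimpleGraph V) (F V1 V2 : Set V) : Prop :=
  V1 ⊆ F ∧ ∃ seq : List (V × V), ValidSeq (StdForce G) seq F ∧
    filledAfter F seq = Set.univ ∧ sourcesOf seq ⊆ V1 ∧ targetsOf seq ⊆ V2

/-- `(V1, V2)` is a partition of the vertex set of `G` into two cliques. -/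
def IsCliquePartition (G : SimpleGraph V) (V1 V2 : Set V) : Prop :=
  Disjoint V1 V2 ∧ V1 ∪ V2 = Set.univ ∧ G.IsClique V1 ∧ G.IsClique V2

/-- `G` is cobipartite. -/
def Cobipartite (G : SimpleGraph V) : Prop := ∃ V1 V2 : Set V, IsCliquePartition G V1 V2

/-- `G` is the cobipartite graph associated with the pattern `Y`, via labelings `r`, `c`. -/
def CobipAssociated (G : SimpleGraph V) {m n : ℕ} (Y : Fin m → Fin n → Prop)
    (r : Fin m → V) (c : Fin n → V) : Prop :=
  PartitionAccording G Y r c ∧ G.IsClique (Set.range r) ∧ G.IsClique (Set.range c)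

/-- `z` is a critical vertex: some optimal forcing sequence neither lets `z` force
nor forces `z`. -/
def Critical (G : SimpleGraph V) (z : V) : Prop :=
  ∃ (F : Set V) (seq : List (V × V)), F.ncard = Z G ∧ ValidSeq (StdForce G) seq F ∧
    filledAfter F seq = Set.univ ∧ z ∉ sourcesOf seq ∧ z ∉ targetsOf seq

/-- `z` is an uncritical vertex: in every optimal forcing sequence, exactly one of the
following holds: `z` performs a force, or `z` gets forced. -/
def Uncritical (G : SimpleGraph V) (z : V) : Prop :=
  ∀ (F : Set V) (seq : List (V × V)), F.ncard = Z G → ValidSeq (StdForce G) seq F →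
    filledAfter F seq = Set.univ → (z ∈ sourcesOf seq ↔ z ∉ targetsOf seq)

/-- The maximum nullity `M(G)` over the field `𝔽`. -/
noncomputable def Mnum (𝔽 : Type*) [Field 𝔽] [Fintype V] [DecidableEq V]
    (G : SimpleGraph V) : ℕ :=
  sSup {k | ∃ A : Matrix V V 𝔽, A.IsSymm ∧ (∀ i j : V, i ≠ j → (A i j ≠ 0 ↔ G.Adj i j)) ∧
    k = Fintype.card V - A.rank}

/-- The minimum rank `mr_𝔽(Y)` of a zero-nonzero pattern over the field `𝔽`. -/
noncomputable def mr (𝔽 : Type*) [Field 𝔽] {m n : ℕ} (Y : Fin m → Fin n → Prop) : ℕ :=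
  sInf {k | ∃ A : Matrix (Fin m) (Fin n) 𝔽, (∀ i j, A i j ≠ 0 ↔ Y i j) ∧ A.rank = k}

/-- `G` is a `k`-tree: there is a construction ordering of the vertices in which the
first `k+1` vertices form a clique and every later vertex is adjacent among the earlier
vertices to exactly a `k`-clique. -/
def IsKTree (k : ℕ) [Fintype V] (G : SimpleGraph V) : Prop :=
  k + 1 ≤ Fintype.card V ∧ ∃ ord : V ≃ Fin (Fintype.card V),
    (∀ u v : V, (ord u : ℕ) < k + 1 → (ord v : ℕ) < k + 1 → u ≠ v → G.Adj u v) ∧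
    ∀ v : V, k + 1 ≤ (ord v : ℕ) →
      G.IsClique {u : V | (ord u : ℕ) < (ord v : ℕ) ∧ G.Adj u v} ∧
      {u : V | (ord u : ℕ) < (ord v : ℕ) ∧ G.Adj u v}.ncard = k

section Reversal

variable {V : Type*}

lemma sourcesOf_nil' : sourcesOf ([] : List (V × V)) = ∅ := by
  ext x; simp [sourcesOf]

lemma sourcesOf_cons' (p : V × V) (l : List (V × V)) :
    sourcesOf (p :: l) = insert p.1 (sourcesOf l) := by
  ext x; simp only [sourcesOf, Set.mem_setOf_eq, List.mem_cons, Set.mem_insert_iff]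
  constructor
  · rintro ⟨q, hq | hq, rfl⟩
    · exact Or.inl (by rw [hq])
    · exact Or.inr ⟨q, hq, rfl⟩
  · rintro (rfl | ⟨q, hq, rfl⟩)
    · exact ⟨p, Or.inl rfl, rfl⟩
    · exact ⟨q, Or.inr hq, rfl⟩

lemma targetsOf_nil' : targetsOf ([] : List (V × V)) = ∅ := by
  ext x; simp [targetsOf]

lemma targetsOf_cons' (p : V × V) (l : List (V × V)) :
    targetsOf (p :: l) = insert p.2 (targetsOf l) := by
  ext x; simp only [targetsOf, Set.mem_setOf_eq, List.mem_cons, Set.mem_insert_iff]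
  constructor
  · rintro ⟨q, hq | hq, rfl⟩
    · exact Or.inl (by rw [hq])
    · exact Or.inr ⟨q, hq, rfl⟩
  · rintro (rfl | ⟨q, hq, rfl⟩)
    · exact ⟨p, Or.inl rfl, rfl⟩
    · exact ⟨q, Or.inr hq, rfl⟩

/-- The reversal of a forcing sequence. -/
def revSeq (l : List (V × V)) : List (V × V) := (l.reverse).map Prod.swap

lemma revSeq_cons (p : V × V) (l : List (V × V)) :
    revSeq (p :: l) = revSeq l ++ [p.swap] := by
  simp [revSeq]

lemma sourcesOf_revSeq (l : List (V × V)) : sourcesOf (revSeq l) = targetsOf l := by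
  ext x
  simp only [sourcesOf, targetsOf, revSeq, Set.mem_setOf_eq, List.mem_map,
    List.mem_reverse]
  constructor
  · rintro ⟨q, ⟨r, hr, rfl⟩, rfl⟩
    exact ⟨r, hr, rfl⟩
  · rintro ⟨q, hq, rfl⟩
    exact ⟨q.swap, ⟨q, hq, rfl⟩, rfl⟩

lemma targetsOf_revSeq (l : List (V × V)) : targetsOf (revSeq l) = sourcesOf l := by
  ext x
  simp only [sourcesOf, targetsOf, revSeq, Set.mem_setOf_eq, List.mem_map,
    List.mem_reverse]
  constructor
  · rintro ⟨q, ⟨r, hr, rfl⟩, rfl⟩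
    exact ⟨r, hr, rfl⟩
  · rintro ⟨q, hq, rfl⟩
    exact ⟨q.swap, ⟨q, hq, rfl⟩, rfl⟩

lemma filledAfter_cons' (A : Set V) (a b : V) (l : List (V × V)) :
    filledAfter A ((a, b) :: l) = filledAfter (insert b A) l := by
  simp only [filledAfter, targetsOf_cons']
  ext x; simp only [Set.mem_union, Set.mem_insert_iff]; tauto

lemma validSeq_snoc (rule : Set V → V → V → Prop) :
    ∀ (l : List (V × V)) (u v : V) (A : Set V),
      ValidSeq rule (l ++ [(u, v)]) A ↔
        ValidSeq rule l A ∧ (∀ p ∈ l, u ≠ p.1) ∧ rule (filledAfter A l) u v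
  | [], u, v, A => by
      simp [ValidSeq, filledAfter, targetsOf_nil']
  | (x, y) :: t, u, v, A => by
      rw [List.cons_append]
      show (rule A x y ∧ (∀ p ∈ t ++ [(u, v)], p.1 ≠ x) ∧
          ValidSeq rule (t ++ [(u, v)]) (insert y A)) ↔ _
      rw [validSeq_snoc rule t u v (insert y A), filledAfter_cons']
      simp only [List.forall_mem_append, List.forall_mem_singleton,
        List.forall_mem_cons, ValidSeq]
      tauto

lemma targets_not_mem {G : SimpleGraph V} :
    ∀ {l : List (V × V)} {S : Set V}, ValidSeq (StdForce G) l S → ∀ p ∈ l, p.2 ∉ S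
  | [], S, _, p, hp => absurd hp List.not_mem_nil
  | (v, u) :: t, S, hval, p, hp => by
      rw [List.mem_cons] at hp
      rcases hp with rfl | hp
      · exact hval.1.2.1
      · exact fun hS => targets_not_mem hval.2.2 p hp (Set.mem_insert_of_mem u hS)

lemma rev_valid {G : SimpleGraph V} :
    ∀ (l : List (V × V)) (S A : Set V), ValidSeq (StdForce G) l S →
      Disjoint A (sourcesOf l) → targetsOf l ⊆ A →
      (∀ z, z ∉ A → z ∉ sourcesOf l → ∀ p ∈ l, ¬ G.Adj p.2 z) →
      ValidSeq (StdForce G) (revSeq l) A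
  | [], S, A, _, _, _, _ => by simp [revSeq, ValidSeq]
  | (v, u) :: t, S, A, hval, hdisj, htgt, hz => by
      obtain ⟨hforce, hfst, hvalt⟩ := hval
      have hsrc_cons : sourcesOf ((v, u) :: t) = insert v (sourcesOf t) :=
        sourcesOf_cons' _ _
      have htgt_cons : targetsOf ((v, u) :: t) = insert u (targetsOf t) :=
        targetsOf_cons' _ _
      have htnm := targets_not_mem hvalt
      rw [revSeq_cons, Prod.swap_prod_mk, validSeq_snoc]
      refine ⟨?_, ?_, ?_⟩
      · -- IH
        refine rev_valid t (insert u S) A hvalt ?_ ?_ ?_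
        · exact hdisj.mono_right (by rw [hsrc_cons]; exact Set.subset_insert _ _)
        · exact fun x hx => htgt (by rw [htgt_cons]; exact Set.mem_insert_of_mem _ hx)
        · intro z hzA hzs p hp hadj
          by_cases hzv : z = v
          · subst hzv
            have h1 : p.2 ∉ S := fun h => htnm p hp (Set.mem_insert_of_mem u h)
            have h2 : p.2 = u := hforce.2.2.2 p.2 hadj.symm h1
            exact htnm p hp (h2 ▸ Set.mem_insert u S)
          · have : z ∉ sourcesOf ((v, u) :: t) := by
              rw [hsrc_cons]; rintro (h | h); exact hzv h; exact hzs h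
            exact hz z hzA this p (List.mem_cons_of_mem _ hp) hadj
      · -- u ≠ sources of revSeq t
        intro p hp
        have hmem : p.1 ∈ sourcesOf (revSeq t) := ⟨p, hp, rfl⟩
        rw [sourcesOf_revSeq] at hmem
        obtain ⟨q, hq, hq2⟩ := hmem
        intro h
        exact htnm q hq (hq2 ▸ h ▸ Set.mem_insert u S)
      · -- final force
        have hfa : filledAfter A (revSeq t) = A ∪ sourcesOf t := by
          rw [filledAfter, targetsOf_revSeq]
        rw [hfa]
        have huA : u ∈ A := htgt (by rw [htgt_cons]; exact Set.mem_insert _ _)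
        have hvA : v ∉ A := fun h =>
          (Set.disjoint_left.mp hdisj h) (by rw [hsrc_cons]; exact Set.mem_insert _ _)
        have hvt : v ∉ sourcesOf t := by
          rintro ⟨q, hq, rfl⟩; exact hfst q hq rfl
        refine ⟨Or.inl huA, ?_, hforce.2.2.1.symm, ?_⟩
        · rintro (h | h); exact hvA h; exact hvt h
        · intro w hadj hw
          by_contra hwv
          have hwA : w ∉ A := fun h => hw (Or.inl h)
          have hws : w ∉ sourcesOf ((v, u) :: t) := by
            rw [hsrc_cons]
            rintro (h | h); exact hwv h; exact hw (Or.inr h)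
          exact hz w hwA hws (v, u) List.mem_cons_self hadj

lemma nodup_fst {rule : Set V → V → V → Prop} :
    ∀ {l : List (V × V)} {S : Set V}, ValidSeq rule l S → (l.map Prod.fst).Nodup
  | [], S, _ => List.nodup_nil
  | (v, u) :: t, S, hval => by
      simp only [List.map_cons, List.nodup_cons]
      refine ⟨?_, nodup_fst hval.2.2⟩
      simp only [List.mem_map]
      rintro ⟨p, hp, hp1⟩
      exact hval.2.1 p hp hp1

lemma nodup_snd {G : SimpleGraph V} :
    ∀ {l : List (V × V)} {S : Set V}, ValidSeq (StdForce G) l S → (l.map Prod.snd).Nodup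
  | [], S, _ => List.nodup_nil
  | (v, u) :: t, S, hval => by
      simp only [List.map_cons, List.nodup_cons]
      refine ⟨?_, nodup_snd hval.2.2⟩
      simp only [List.mem_map]
      rintro ⟨p, hp, hp2⟩
      exact targets_not_mem hval.2.2 p hp (hp2 ▸ Set.mem_insert u S)

lemma sourcesOf_eq_toFinset [DecidableEq V] (l : List (V × V)) :
    sourcesOf l = ↑(l.map Prod.fst).toFinset := by
  ext x
  simp only [sourcesOf, Set.mem_setOf_eq, Finset.mem_coe,
    List.mem_toFinset, List.mem_map]

lemma targetsOf_eq_toFinset [DecidableEq V] (l : List (V × V)) :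
    targetsOf l = ↑(l.map Prod.snd).toFinset := by
  ext x
  simp only [targetsOf, Set.mem_setOf_eq, Finset.mem_coe,
    List.mem_toFinset, List.mem_map]

end Reversal

/-- If `F` is a direct zero forcing set for `G` and `seq` is a complete
forcing sequence from `F` filling every vertex in which every forcing chain has length
`0` or `1` (equivalently, no vertex both forces and gets forced), and `W` is the set of
vertices that perform a force in `seq`, then `V(G) \\ W` is a direct zero forcing set
for `G` of size `|F|`. -/
theorem reversal_of_direct_ZF_set
    {V : Type*} [Fintype V] [DecidableEq V] (G : SimpleGraph V) (F : Set V)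
    (hF : IsDirectZFSet G F)
    (seq : List (V × V)) (hval : ValidSeq (StdForce G) seq F)
    (hfill : filledAfter F seq = Set.univ)
    (hchain : Disjoint (sourcesOf seq) (targetsOf seq)) :
    IsDirectZFSet G (Set.univ \ sourcesOf seq) ∧
      (Set.univ \ sourcesOf seq).ncard = F.ncard := by
  classical
  set W := sourcesOf seq with hW
  have hT : targetsOf seq ⊆ Set.univ \ W := fun x hx =>
    ⟨Set.mem_univ x, fun hs => Set.disjoint_left.mp hchain hs hx⟩
  constructor
  · refine ⟨revSeq seq, ?_, ?_, ?_⟩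
    · refine rev_valid seq F _ hval ?_ hT ?_
      · exact disjoint_sdiff_self_left
      · intro z hz hzs
        exact absurd ⟨Set.mem_univ z, hzs⟩ hz
    · rw [filledAfter, targetsOf_revSeq]
      ext x
      simp only [Set.mem_union, Set.mem_diff, Set.mem_univ, true_and, Set.mem_univ,
        iff_true]
      by_cases h : x ∈ W
      · exact Or.inr h
      · exact Or.inl h
    · rw [sourcesOf_revSeq]
      exact hT
  · have hnf : (seq.map Prod.fst).Nodup := nodup_fst hval
    have hns : (seq.map Prod.snd).Nodup := nodup_snd hval
    have hWcard : W.ncard = seq.length := by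
      rw [hW, sourcesOf_eq_toFinset, Set.ncard_coe_finset,
        List.toFinset_card_of_nodup hnf, List.length_map]
    have hTcard : (targetsOf seq).ncard = seq.length := by
      rw [targetsOf_eq_toFinset, Set.ncard_coe_finset,
        List.toFinset_card_of_nodup hns, List.length_map]
    have hFeq : F = Set.univ \ targetsOf seq := by
      ext x
      constructor
      · intro hx
        refine ⟨Set.mem_univ x, ?_⟩
        rintro ⟨p, hp, rfl⟩
        exact targets_not_mem hval p hp hx
      · rintro ⟨-, hx⟩
        have hx2 : x ∈ filledAfter F seq := by rw [hfill]; exact Set.mem_univ x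
        rcases hx2 with h | h
        · exact h
        · exact absurd h hx
    rw [hFeq, Set.ncard_diff (Set.subset_univ _), Set.ncard_diff (Set.subset_univ _),
      hWcard, hTcard]
end

section
/- Let Y be an m×n zero-nonzero pattern and let (V_1, V_2) be a partition of a finite simple graph G according to Y. If there exists an optimal zero forcing set F for G (i.e., one of size Z(G)) that forces from V_1 to V_2, then Z(G) = m + n − tri(Y). -/
/-!  Common definitions: zero forcing (standard, loop, positive semidefinite),
zero-nonzero patterns, triangles, and related graph parameters. -/

variable {V : Type*}

section Statement10Aux

variable {V : Type*}

/-- Invariants of a valid standard forcing sequence. -/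
lemma validSeq_invariants (G : SimpleGraph V) :
    ∀ (seq : List (V × V)) (F : Set V), ValidSeq (StdForce G) seq F →
      (seq.map Prod.fst).Nodup ∧ (seq.map Prod.snd).Nodup ∧
      (∀ p ∈ seq, p.2 ∉ F) ∧ (∀ p ∈ seq, G.Adj p.1 p.2) ∧
      List.Pairwise (fun p q : V × V => ¬ G.Adj p.1 q.2) seq := by
  intro seq
  induction seq with
  | nil => intro F _; simp
  | cons hd rest ih =>
    intro F hv
    obtain ⟨v, u⟩ := hd
    obtain ⟨hf, hns, hrest⟩ := hv
    obtain ⟨ih1, ih2, ih3, ih4, ih5⟩ := ih (insert u F) hrest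
    refine ⟨?_, ?_, ?_, ?_, ?_⟩
    · simp only [List.map_cons, List.nodup_cons]
      refine ⟨fun hm => ?_, ih1⟩
      obtain ⟨p, hp, hp1⟩ := List.mem_map.mp hm
      exact hns p hp hp1
    · simp only [List.map_cons, List.nodup_cons]
      refine ⟨fun hm => ?_, ih2⟩
      obtain ⟨p, hp, hp2⟩ := List.mem_map.mp hm
      exact ih3 p hp (hp2 ▸ Set.mem_insert u F)
    · intro p hp
      rcases List.mem_cons.mp hp with h | h
      · subst h; exact hf.2.1
      · exact fun hpF => ih3 p h (Set.mem_insert_of_mem _ hpF)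
    · intro p hp
      rcases List.mem_cons.mp hp with h | h
      · subst h; exact hf.2.2.1
      · exact ih4 p h
    · refine List.pairwise_cons.mpr ⟨fun q hq hadj => ?_, ih5⟩
      have h2 : q.2 ∉ insert u F := ih3 q hq
      have hq2 : q.2 = u :=
        hf.2.2.2 q.2 hadj (fun h => h2 (Set.mem_insert_of_mem _ h))
      exact h2 (hq2 ▸ Set.mem_insert u F)

/-- A "triangular" list of forces is a valid forcing sequence starting from the
complement of its targets. -/
lemma validSeq_of_triangular (G : SimpleGraph V) :
    ∀ (seq : List (V × V)),
      (∀ p ∈ seq, ∀ q ∈ seq, p.1 ≠ q.2) →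
      (seq.map Prod.fst).Nodup →
      (seq.map Prod.snd).Nodup →
      (∀ p ∈ seq, G.Adj p.1 p.2) →
      List.Pairwise (fun p q : V × V => ¬ G.Adj p.1 q.2) seq →
      ValidSeq (StdForce G) seq ((targetsOf seq)ᶜ) := by
  intro seq
  induction seq with
  | nil => intro _ _ _ _ _; trivial
  | cons hd rest ih =>
    intro hst h1 h2 h3 h4
    obtain ⟨v, u⟩ := hd
    obtain ⟨hpw1, hpw2⟩ := List.pairwise_cons.mp h4
    simp only [List.map_cons, List.nodup_cons] at h1 h2
    have hu_rest : u ∉ targetsOf rest := by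
      rintro ⟨p, hp, hp2⟩
      exact h2.1 (List.mem_map.mpr ⟨p, hp, hp2⟩)
    have hins : insert u ((targetsOf ((v, u) :: rest))ᶜ) = (targetsOf rest)ᶜ := by
      ext x
      simp only [Set.mem_insert_iff, Set.mem_compl_iff]
      constructor
      · rintro (rfl | hx)
        · exact hu_rest
        · rintro ⟨p, hp, hp2⟩
          exact hx ⟨p, List.mem_cons_of_mem _ hp, hp2⟩
      · intro hx
        by_cases hxu : x = u
        · exact Or.inl hxu
        · refine Or.inr ?_
          rintro ⟨p, hp, hp2⟩
          rcases List.mem_cons.mp hp with h | h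
          · subst h; exact hxu hp2.symm
          · exact hx ⟨p, h, hp2⟩
    refine ⟨⟨?_, ?_, ?_, ?_⟩, ?_, ?_⟩
    · rintro ⟨p, hp, hp2⟩
      exact hst (v, u) (List.mem_cons_self) p hp hp2.symm
    · intro h
      exact h ⟨(v, u), List.mem_cons_self, rfl⟩
    · exact h3 (v, u) (List.mem_cons_self)
    · intro w hadj hw
      have hwmem : w ∈ targetsOf ((v, u) :: rest) := Set.not_notMem.mp hw
      obtain ⟨p, hp, hp2⟩ := hwmem
      rcases List.mem_cons.mp hp with h | h
      · subst h; exact hp2.symm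
      · exact absurd (hp2 ▸ hadj) (hpw1 p h)
    · intro p hp heq
      exact h1.1 (List.mem_map.mpr ⟨p, hp, heq⟩)
    · rw [hins]
      exact ih
        (fun p hp q hq =>
          hst p (List.mem_cons_of_mem _ hp) q (List.mem_cons_of_mem _ hq))
        h1.2 h2.2 (fun p hp => h3 p (List.mem_cons_of_mem _ hp)) hpw2

end Statement10Aux

/-- If `(V₁, V₂)` is a partition of `G` according to `Y` and some
optimal zero forcing set for `G` forces from `V₁` to `V₂`, then
`Z(G) = m + n − tri(Y)`. -/
theorem Z_eq_of_optimal_forces_from_to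
    {V : Type*} [Fintype V] [DecidableEq V] {m n : ℕ} (Y : Fin m → Fin n → Prop)
    (G : SimpleGraph V) (r : Fin m → V) (c : Fin n → V)
    (hpart : PartitionAccording G Y r c)
    (hopt : ∃ F : Set V, F.ncard = Z G ∧ ForcesFromTo G F (Set.range r) (Set.range c)) :
    Z G = m + n - tri Y := by
  classical
  obtain ⟨F, hF, hV1F, seq, hvalid, hfill, hsrc, htgt⟩ := hopt
  obtain ⟨hrinj, hcinj, hrc, hcover, hadjY⟩ := hpart
  obtain ⟨h1, h2, h3, h4, h5⟩ := validSeq_invariants G seq F hvalid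
  unfold filledAfter at hfill
  -- cardinality of V
  have hunion : Set.range r ∪ Set.range c = (Set.univ : Set V) := by
    ext v
    simp only [Set.mem_union, Set.mem_range, Set.mem_univ, iff_true]
    exact hcover v
  have hdisRC : Disjoint (Set.range r) (Set.range c) := by
    rw [Set.disjoint_left]
    rintro v ⟨i, rfl⟩ ⟨j, hj⟩
    exact hrc i j hj.symm
  have hm : (Set.range r).ncard = m := by
    rw [← Nat.card_coe_set_eq, Nat.card_range_of_injective hrinj, Nat.card_eq_fintype_card,
      Fintype.card_fin]
  have hn : (Set.range c).ncard = n := by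
    rw [← Nat.card_coe_set_eq, Nat.card_range_of_injective hcinj, Nat.card_eq_fintype_card,
      Fintype.card_fin]
  have hcardV : Nat.card V = m + n := by
    rw [← Set.ncard_univ, ← hunion,
      Set.ncard_union_eq hdisRC (Set.toFinite _) (Set.toFinite _), hm, hn]
  -- cardinality of the target set
  have htgtset : targetsOf seq = ↑(seq.map Prod.snd).toFinset := by
    ext x
    simp only [Finset.coe_sort_coe, List.coe_toFinset, List.mem_map, Set.mem_setOf_eq]
    rfl
  have htgtcard : (targetsOf seq).ncard = seq.length := by
    rw [htgtset, Set.ncard_coe_finset, List.toFinset_card_of_nodup h2, List.length_map]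
  have hdisj : Disjoint F (targetsOf seq) := by
    rw [Set.disjoint_right]
    rintro x ⟨p, hp, rfl⟩
    exact h3 p hp
  have hZk : Z G + seq.length = m + n := by
    have h := Set.ncard_union_eq hdisj (Set.toFinite _) (Set.toFinite _)
    rw [hfill, Set.ncard_univ, hcardV, hF, htgtcard] at h
    omega
  -- the forcing sequence yields a triangle of size seq.length
  have hfstne : ∀ i j : Fin seq.length, i < j → (seq.get i).1 ≠ (seq.get j).1 :=
    List.pairwise_iff_get.mp (List.pairwise_map.mp h1)
  have hsndne : ∀ i j : Fin seq.length, i < j → (seq.get i).2 ≠ (seq.get j).2 :=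
    List.pairwise_iff_get.mp (List.pairwise_map.mp h2)
  have hnadj : ∀ i j : Fin seq.length, i < j → ¬ G.Adj (seq.get i).1 (seq.get j).2 :=
    List.pairwise_iff_get.mp h5
  have hsrcR : ∀ i : Fin seq.length, ∃ a, r a = (seq.get i).1 := by
    intro i
    exact hsrc ⟨seq.get i, List.get_mem seq i, rfl⟩
  have htgtR : ∀ i : Fin seq.length, ∃ b, c b = (seq.get i).2 := by
    intro i
    exact htgt ⟨seq.get i, List.get_mem seq i, rfl⟩
  choose a ha using hsrcR
  choose b hb using htgtR
  have hainj : Function.Injective a := by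
    intro i j hij
    by_contra hne
    have heq : (seq.get i).1 = (seq.get j).1 := by rw [← ha i, ← ha j, hij]
    rcases lt_or_gt_of_ne hne with h | h
    · exact hfstne i j h heq
    · exact hfstne j i h heq.symm
  have hbinj : Function.Injective b := by
    intro i j hij
    by_contra hne
    have heq : (seq.get i).2 = (seq.get j).2 := by rw [← hb i, ← hb j, hij]
    rcases lt_or_gt_of_ne hne with h | h
    · exact hsndne i j h heq
    · exact hsndne j i h heq.symm
  have htri_k : HasTriOfSize Y seq.length := by
    refine ⟨a, b, hainj, hbinj, ?_, ?_⟩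
    · intro i
      rw [← hadjY, ha, hb]
      exact h4 (seq.get i) (List.get_mem seq i)
    · intro i j hij
      rw [← hadjY, ha, hb]
      exact hnadj i j hij
  -- any triangle bounds Z G
  have hub : ∀ K, HasTriOfSize Y K → Z G ≤ m + n - K ∧ K ≤ n := by
    intro K hK
    obtain ⟨a', b', ha'inj, hb'inj, hdiag, hzero⟩ := hK
    have hKn : K ≤ n := by
      have := Fintype.card_le_of_injective b' hb'inj
      simpa using this
    set L : List (V × V) := (List.finRange K).map (fun i => (r (a' i), c (b' i))) with hL
    have hmemL : ∀ p : V × V, p ∈ L ↔ ∃ i, (r (a' i), c (b' i)) = p := by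
      intro p
      simp [hL, List.mem_map]
    have hra' : Function.Injective (fun i : Fin K => r (a' i)) := hrinj.comp ha'inj
    have hcb' : Function.Injective (fun i : Fin K => c (b' i)) := hcinj.comp hb'inj
    have hLfst : (L.map Prod.fst).Nodup := by
      rw [hL, List.map_map]
      exact (List.nodup_finRange K).map hra'
    have hLsnd : (L.map Prod.snd).Nodup := by
      rw [hL, List.map_map]
      exact (List.nodup_finRange K).map hcb'
    have hLadj : ∀ p ∈ L, G.Adj p.1 p.2 := by
      intro p hp
      obtain ⟨i, rfl⟩ := (hmemL p).mp hp
      exact (hadjY _ _).mpr (hdiag i)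
    have hLpw : List.Pairwise (fun p q : V × V => ¬ G.Adj p.1 q.2) L := by
      rw [hL, List.pairwise_map]
      refine (List.pairwise_lt_finRange K).imp ?_
      intro i j hij hadj
      exact hzero i j hij ((hadjY _ _).mp hadj)
    have hLst : ∀ p ∈ L, ∀ q ∈ L, p.1 ≠ q.2 := by
      intro p hp q hq
      obtain ⟨i, rfl⟩ := (hmemL p).mp hp
      obtain ⟨j, rfl⟩ := (hmemL q).mp hq
      exact hrc (a' i) (b' j)
    have hLvalid := validSeq_of_triangular G L hLst hLfst hLsnd hLadj hLpw
    have hLfill : filledAfter ((targetsOf L)ᶜ) L = Set.univ := by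
      unfold filledAfter
      rw [Set.compl_union_self]
    have hZF : IsZFSet (StdForce G) ((targetsOf L)ᶜ) := ⟨L, hLvalid, hLfill⟩
    have hLtgt : targetsOf L = Set.range (fun i : Fin K => c (b' i)) := by
      ext x
      constructor
      · rintro ⟨p, hp, rfl⟩
        obtain ⟨i, rfl⟩ := (hmemL p).mp hp
        exact ⟨i, rfl⟩
      · rintro ⟨i, rfl⟩
        exact ⟨(r (a' i), c (b' i)), (hmemL _).mpr ⟨i, rfl⟩, rfl⟩
    have htcard : (targetsOf L).ncard = K := by
      rw [hLtgt, ← Nat.card_coe_set_eq, Nat.card_range_of_injective hcb',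
        Nat.card_eq_fintype_card, Fintype.card_fin]
    have hccard : ((targetsOf L)ᶜ).ncard = m + n - K := by
      have h := Set.ncard_add_ncard_compl (targetsOf L) (Set.toFinite _) (Set.toFinite _)
      rw [htcard, hcardV] at h
      omega
    have hle : Z G ≤ ((targetsOf L)ᶜ).ncard :=
      Nat.sInf_le ⟨(targetsOf L)ᶜ, hZF, rfl⟩
    rw [hccard] at hle
    exact ⟨hle, hKn⟩
  -- compute tri Y
  have h0 : HasTriOfSize Y 0 :=
    ⟨fun i => i.elim0, fun i => i.elim0, fun i => i.elim0, fun i => i.elim0,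
      fun i => i.elim0, fun i => i.elim0⟩
  have hbdd : BddAbove {k | HasTriOfSize Y k} := ⟨n, fun K hK => (hub K hK).2⟩
  have htri_le : tri Y ≤ seq.length := by
    refine csSup_le ⟨0, h0⟩ ?_
    intro K hK
    obtain ⟨hle, hKn⟩ := hub K hK
    omega
  have hle_tri : seq.length ≤ tri Y := le_csSup hbdd htri_k
  omega
end

section
/- Let 𝔽 be a field, let Y be an m×n zero-nonzero pattern, and let G be the cobipartite graph associated with Y, and suppose G is saturated with respect to the corresponding clique partition. If M(G) = Z(G) over 𝔽, then mr_𝔽(Y) = tri(Y). -/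
/-!  Common definitions: zero forcing (standard, loop, positive semidefinite),
zero-nonzero patterns, triangles, and related graph parameters. -/

variable {V : Type*}

section AuxProof

variable {V : Type*}

private lemma validSeq_snd_not_mem {G : SimpleGraph V} :
    ∀ (l : List (V × V)) (F : Set V), ValidSeq (StdForce G) l F → ∀ p ∈ l, p.2 ∉ F := by
  intro l
  induction l with
  | nil => intro F _ p hp; simp at hp
  | cons q rest ih =>
    obtain ⟨v, u⟩ := q
    intro F hval p hp
    simp only [ValidSeq] at hval
    rcases List.mem_cons.mp hp with h | h
    · subst h; exact hval.1.2.1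
    · exact fun hF => ih (insert u F) hval.2.2 p h (Set.mem_insert_of_mem _ hF)

private lemma mem_targetsOf {l : List (V × V)} {p : V × V} (hp : p ∈ l) : p.2 ∈ targetsOf l :=
  ⟨p, hp, rfl⟩

/-- From a list of (row index, column index) pairs with nonzero "diagonal" and
zero "upper part", we get a triangle. -/
private lemma hasTri_of_pairs {ρ γ : Type*} (Y : ρ → γ → Prop) (pl : List (ρ × γ))
    (hd : ∀ p ∈ pl, Y p.1 p.2)
    (hp : List.Pairwise (fun p q => ¬ Y p.1 q.2) pl) :
    HasTriOfSize Y pl.length := by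
  have hget : ∀ i j : Fin pl.length, i < j → ¬ Y (pl.get i).1 (pl.get j).2 :=
    fun i j hij => (List.pairwise_iff_get.mp hp) i j hij
  have hmem : ∀ i : Fin pl.length, pl.get i ∈ pl := fun i => List.get_mem pl i
  refine ⟨fun i => (pl.get i).1, fun i => (pl.get i).2, ?_, ?_, ?_, ?_⟩
  · intro i j hij
    simp only at hij
    by_contra hne
    rcases lt_or_gt_of_ne hne with h | h
    · exact hget i j h (by rw [hij]; exact hd _ (hmem j))
    · exact hget j i h (by rw [← hij]; exact hd _ (hmem i))
  · intro i j hij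
    simp only at hij
    by_contra hne
    rcases lt_or_gt_of_ne hne with h | h
    · exact hget i j h (by rw [← hij]; exact hd _ (hmem i))
    · exact hget j i h (by rw [hij]; exact hd _ (hmem j))
  · exact fun i => hd _ (hmem i)
  · exact fun i j hij => hget i j hij

private lemma hasTri_flip {ρ γ : Type*} (Y : ρ → γ → Prop) (k : ℕ)
    (h : HasTriOfSize (fun y x => Y x y) k) : HasTriOfSize Y k := by
  obtain ⟨rr, cc, hrinj, hcinj, hdiag, hzero⟩ := h
  refine ⟨fun i => cc i.rev, fun i => rr i.rev, hcinj.comp (fun a b h => Fin.rev_injective h),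
    hrinj.comp (fun a b h => Fin.rev_injective h), fun i => hdiag i.rev, ?_⟩
  intro i j hij
  exact hzero j.rev i.rev (Fin.rev_lt_rev.mpr hij)

end AuxProof

section AuxProof2

variable {V : Type*}

/-- Case analysis lemma: in a forcing sequence where all targets are column vertices,
we can extract a triangle pair-list whose columns are all targets. -/
private lemma lemA {G : SimpleGraph V} {m n : ℕ} {Y : Fin m → Fin n → Prop}
    {r : Fin m → V} {c : Fin n → V}
    (hadj : ∀ i j, G.Adj (r i) (c j) ↔ Y i j)
    (hcc : G.IsClique (Set.range c))
    (hcov : ∀ v : V, v ∈ Set.range r ∨ v ∈ Set.range c)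
    (hsat2 : ∀ j, ∃ i, G.Adj (r i) (c j)) :
    ∀ (l : List (V × V)) (F : Set V), ValidSeq (StdForce G) l F →
      (∀ p ∈ l, p.2 ∈ Set.range c) →
      ∃ pl : List (Fin m × Fin n), pl.length = l.length ∧
        (∀ p ∈ pl, Y p.1 p.2) ∧
        List.Pairwise (fun p q => ¬ Y p.1 q.2) pl ∧
        (∀ p ∈ pl, c p.2 ∈ targetsOf l) := by
  intro l
  induction l with
  | nil => exact fun F _ _ => ⟨[], rfl, by simp, by simp, by simp⟩
  | cons q rest ih =>
    obtain ⟨v, u⟩ := q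
    intro F hval htc
    simp only [ValidSeq] at hval
    obtain ⟨⟨hvF, huF, hadjvu, hrule⟩, hsrc, hvalrest⟩ := hval
    obtain ⟨j₀, hj₀⟩ := htc (v, u) (List.mem_cons_self)
    by_cases hvc : v ∈ Set.range c
    · -- column forces column: the rest must be empty
      have hrest : rest = [] := by
        cases rest with
        | nil => rfl
        | cons p rest2 =>
          exfalso
          have hp2c := htc p (by simp)
          have hp2 : p.2 ∉ insert u F :=
            validSeq_snd_not_mem _ _ hvalrest p (List.mem_cons_self)
          have hne : v ≠ p.2 := fun h => hp2 (Set.mem_insert_of_mem _ (h ▸ hvF))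
          have hAdj : G.Adj v p.2 := hcc hvc hp2c hne
          have heq : p.2 = u := hrule p.2 hAdj (fun h => hp2 (Set.mem_insert_of_mem _ h))
          exact hp2 (by rw [heq]; exact Set.mem_insert _ _)
      subst hrest
      obtain ⟨x, hx⟩ := hsat2 j₀
      refine ⟨[(x, j₀)], rfl, ?_, by simp, ?_⟩
      · intro p hp
        simp only [List.mem_singleton] at hp
        subst hp
        exact (hadj x j₀).mp hx
      · intro p hp
        simp only [List.mem_singleton] at hp
        subst hp
        exact ⟨(v, u), List.mem_cons_self, hj₀.symm⟩
    · -- row forces column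
      have hvr : v ∈ Set.range r := (hcov v).resolve_right hvc
      obtain ⟨i₀, hi₀⟩ := hvr
      have hrestc : ∀ p ∈ rest, p.2 ∈ Set.range c := fun p hp =>
        htc p (List.mem_cons_of_mem _ hp)
      obtain ⟨pl, hlen, hdiag, hpw, htar⟩ := ih (insert u F) hvalrest hrestc
      refine ⟨(i₀, j₀) :: pl, by simp [hlen], ?_, ?_, ?_⟩
      · intro p hp
        rcases List.mem_cons.mp hp with h | h
        · subst h
          exact (hadj i₀ j₀).mp (by rw [hi₀, hj₀]; exact hadjvu)
        · exact hdiag p h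
      · refine List.Pairwise.cons ?_ hpw
        intro q hq hYq
        obtain ⟨p, hp, hpe⟩ := htar q hq
        have hp2 : p.2 ∉ insert u F := validSeq_snd_not_mem _ _ hvalrest p hp
        have hcq : c q.2 ∉ insert u F := hpe ▸ hp2
        have hAdj : G.Adj v (c q.2) := hi₀ ▸ (hadj i₀ q.2).mpr hYq
        have heq : c q.2 = u := hrule (c q.2) hAdj (fun h => hcq (Set.mem_insert_of_mem _ h))
        exact hcq (by rw [heq]; exact Set.mem_insert _ _)
      · intro p hp
        rcases List.mem_cons.mp hp with h | h
        · subst h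
          exact ⟨(v, u), List.mem_cons_self, hj₀.symm⟩
        · obtain ⟨p', hp', he⟩ := htar p h
          exact ⟨p', List.mem_cons_of_mem _ hp', he⟩

end AuxProof2

section AuxProof3

variable {V : Type*}

/-- Main extraction, "Case R": no force goes from a column vertex to a row vertex.
Then the whole forcing sequence yields a triangle pair-list of the same length. -/
private lemma lemB {G : SimpleGraph V} {m n : ℕ} {Y : Fin m → Fin n → Prop}
    {r : Fin m → V} {c : Fin n → V}
    (hadj : ∀ i j, G.Adj (r i) (c j) ↔ Y i j)
    (hrc : G.IsClique (Set.range r))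
    (hcc : G.IsClique (Set.range c))
    (hcov : ∀ v : V, v ∈ Set.range r ∨ v ∈ Set.range c)
    (hsat1 : ∀ i, ∃ j, G.Adj (r i) (c j))
    (hsat2 : ∀ j, ∃ i, G.Adj (r i) (c j)) :
    ∀ (l : List (V × V)) (F : Set V), ValidSeq (StdForce G) l F →
      (∀ p ∈ l, ¬ (p.1 ∈ Set.range c ∧ p.2 ∈ Set.range r)) →
      ∃ pl : List (Fin m × Fin n), pl.length = l.length ∧
        (∀ p ∈ pl, Y p.1 p.2) ∧
        List.Pairwise (fun p q => ¬ Y p.1 q.2) pl := by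
  intro l F hval hnocr
  cases l with
  | nil => exact ⟨[], rfl, by simp, by simp⟩
  | cons q rest =>
    obtain ⟨v, u⟩ := q
    simp only [ValidSeq] at hval
    obtain ⟨⟨hvF, huF, hadjvu, hrule⟩, hsrc, hvalrest⟩ := hval
    rcases hcov u with huR | huC
    · -- target of the first force is a row
      obtain ⟨iu, hiu⟩ := huR
      -- the source must also be a row
      have hvr : v ∈ Set.range r := by
        rcases hcov v with h | h
        · exact h
        · exact absurd ⟨h, ⟨iu, hiu⟩⟩ (hnocr (v, u) (List.mem_cons_self))
      obtain ⟨iv, hiv⟩ := hvr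
      -- all later targets are columns
      have hrestc : ∀ p ∈ rest, p.2 ∈ Set.range c := by
        intro p hp
        rcases hcov p.2 with ⟨ip, hip⟩ | h
        · exfalso
          have hp2 : p.2 ∉ insert u F := validSeq_snd_not_mem _ _ hvalrest p hp
          have hne : v ≠ p.2 := fun h => hp2 (Set.mem_insert_of_mem _ (h ▸ hvF))
          have hAdj : G.Adj v p.2 := hrc ⟨iv, hiv⟩ ⟨ip, hip⟩ hne
          have heq : p.2 = u := hrule p.2 hAdj (fun h => hp2 (Set.mem_insert_of_mem _ h))
          exact hp2 (by rw [heq]; exact Set.mem_insert _ _)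
        · exact h
      obtain ⟨pl, hlen, hdiag, hpw, htar⟩ :=
        lemA hadj hcc hcov hsat2 rest (insert u F) hvalrest hrestc
      obtain ⟨jδ, hjδ⟩ := hsat1 iv
      refine ⟨(iv, jδ) :: pl, by simp [hlen], ?_, ?_⟩
      · intro p hp
        rcases List.mem_cons.mp hp with h | h
        · subst h; exact (hadj iv jδ).mp hjδ
        · exact hdiag p h
      · refine List.Pairwise.cons ?_ hpw
        intro q hq hYq
        obtain ⟨p, hp, hpe⟩ := htar q hq
        have hp2 : p.2 ∉ insert u F := validSeq_snd_not_mem _ _ hvalrest p hp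
        have hcq : c q.2 ∉ insert u F := hpe ▸ hp2
        have hAdj : G.Adj v (c q.2) := hiv ▸ (hadj iv q.2).mpr hYq
        have heq : c q.2 = u := hrule (c q.2) hAdj (fun h => hcq (Set.mem_insert_of_mem _ h))
        exact hcq (by rw [heq]; exact Set.mem_insert _ _)
    · -- target of the first force is a column
      obtain ⟨j₀, hj₀⟩ := huC
      by_cases hvc : v ∈ Set.range c
      · -- column forces column: all later forces are row-to-row, and there is at most one
        obtain ⟨jv, hjv⟩ := hvc
        have hrestr : ∀ p ∈ rest, p.1 ∈ Set.range r ∧ p.2 ∈ Set.range r := by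
          intro p hp
          have hp2 : p.2 ∉ insert u F := validSeq_snd_not_mem _ _ hvalrest p hp
          have hp2r : p.2 ∈ Set.range r := by
            rcases hcov p.2 with h | h
            · exact h
            · exfalso
              have hne : v ≠ p.2 := fun hh => hp2 (Set.mem_insert_of_mem _ (hh ▸ hvF))
              have hAdj : G.Adj v p.2 := hcc ⟨jv, hjv⟩ h hne
              have heq : p.2 = u := hrule p.2 hAdj (fun hh => hp2 (Set.mem_insert_of_mem _ hh))
              exact hp2 (by rw [heq]; exact Set.mem_insert _ _)
          refine ⟨?_, hp2r⟩
          rcases hcov p.1 with h | h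
          · exact h
          · exact absurd ⟨h, hp2r⟩ (hnocr p (List.mem_cons_of_mem _ hp))
        cases rest with
        | nil =>
          obtain ⟨x, hx⟩ := hsat2 j₀
          refine ⟨[(x, j₀)], rfl, ?_, by simp⟩
          intro p hp
          simp only [List.mem_singleton] at hp
          subst hp
          exact (hadj x j₀).mp hx
        | cons q2 rest2 =>
          obtain ⟨v₂, u₂⟩ := q2
          simp only [ValidSeq] at hvalrest
          obtain ⟨⟨hv₂F, hu₂F, hadj₂, hrule₂⟩, hsrc₂, hvalrest₂⟩ := hvalrest
          -- rest2 is empty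
          have hrest2 : rest2 = [] := by
            cases rest2 with
            | nil => rfl
            | cons p rest3 =>
              exfalso
              have hp2 : p.2 ∉ insert u₂ (insert u F) :=
                validSeq_snd_not_mem _ _ hvalrest₂ p (List.mem_cons_self)
              have hp2r : p.2 ∈ Set.range r := (hrestr p (by simp)).2
              have hv₂r : v₂ ∈ Set.range r := (hrestr (v₂, u₂) (by simp)).1
              have hne : v₂ ≠ p.2 := fun hh => hp2 (Set.mem_insert_of_mem _ (hh ▸ hv₂F))
              have hAdj : G.Adj v₂ p.2 := hrc hv₂r hp2r hne
              have heq : p.2 = u₂ := hrule₂ p.2 hAdj (fun hh => hp2 (Set.mem_insert_of_mem _ hh))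
              exact hp2 (by rw [heq]; exact Set.mem_insert _ _)
          subst hrest2
          obtain ⟨iu₂, hiu₂⟩ := (hrestr (v₂, u₂) (by simp)).2
          obtain ⟨jd, hjd⟩ := hsat1 iu₂
          obtain ⟨x, hx⟩ := hsat2 jv
          -- key zero: ¬ Y iu₂ jv, since u₂ was unfilled when v forced u
          have hu₂nin : u₂ ∉ insert u F := hu₂F
          have hkey : ¬ Y iu₂ jv := by
            intro hY
            have hAdj : G.Adj v u₂ := by
              have : G.Adj (r iu₂) (c jv) := (hadj iu₂ jv).mpr hY
              rw [hiu₂, hjv] at this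
              exact this.symm
            have heq : u₂ = u := hrule u₂ hAdj (fun hh => hu₂nin (Set.mem_insert_of_mem _ hh))
            exact hu₂nin (by rw [heq]; exact Set.mem_insert _ _)
          refine ⟨[(iu₂, jd), (x, jv)], rfl, ?_, ?_⟩
          · intro p hp
            rcases List.mem_cons.mp hp with h | h
            · subst h; exact (hadj iu₂ jd).mp hjd
            · simp only [List.mem_singleton] at h
              subst h; exact (hadj x jv).mp hx
          · refine List.Pairwise.cons ?_ (by simp)
            intro q hq
            simp only [List.mem_singleton] at hq
            subst hq
            exact hkey
      · -- row forces column
        have hvr : v ∈ Set.range r := (hcov v).resolve_right hvc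
        obtain ⟨i₀, hi₀⟩ := hvr
        have hrestc : ∀ p ∈ rest, p.2 ∈ Set.range c := by
          intro p hp
          rcases hcov p.2 with ⟨ip, hip⟩ | h
          · exfalso
            have hp2 : p.2 ∉ insert u F := validSeq_snd_not_mem _ _ hvalrest p hp
            have hne : v ≠ p.2 := fun h => hp2 (Set.mem_insert_of_mem _ (h ▸ hvF))
            have hAdj : G.Adj v p.2 := hrc ⟨i₀, hi₀⟩ ⟨ip, hip⟩ hne
            have heq : p.2 = u := hrule p.2 hAdj (fun h => hp2 (Set.mem_insert_of_mem _ h))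
            exact hp2 (by rw [heq]; exact Set.mem_insert _ _)
          · exact h
        obtain ⟨pl, hlen, hdiag, hpw, htar⟩ :=
          lemA hadj hcc hcov hsat2 rest (insert u F) hvalrest hrestc
        refine ⟨(i₀, j₀) :: pl, by simp [hlen], ?_, ?_⟩
        · intro p hp
          rcases List.mem_cons.mp hp with h | h
          · subst h
            exact (hadj i₀ j₀).mp (by rw [hi₀, hj₀]; exact hadjvu)
          · exact hdiag p h
        · refine List.Pairwise.cons ?_ hpw
          intro q hq hYq
          obtain ⟨p, hp, hpe⟩ := htar q hq
          have hp2 : p.2 ∉ insert u F := validSeq_snd_not_mem _ _ hvalrest p hp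
          have hcq : c q.2 ∉ insert u F := hpe ▸ hp2
          have hAdj : G.Adj v (c q.2) := hi₀ ▸ (hadj i₀ q.2).mpr hYq
          have heq : c q.2 = u := hrule (c q.2) hAdj (fun h => hcq (Set.mem_insert_of_mem _ h))
          exact hcq (by rw [heq]; exact Set.mem_insert _ _)

end AuxProof3

section AuxProof4

variable {V : Type*}

/-- Dichotomy: a valid forcing sequence cannot contain both a row-to-column force
and a column-to-row force. -/
private lemma lemD {G : SimpleGraph V} {m n : ℕ}
    {r : Fin m → V} {c : Fin n → V}
    (hrc : G.IsClique (Set.range r))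
    (hcc : G.IsClique (Set.range c))
    (hdisj : ∀ i j, r i ≠ c j) :
    ∀ (l : List (V × V)) (F : Set V), ValidSeq (StdForce G) l F →
      ∀ p ∈ l, ∀ q ∈ l, p.1 ∈ Set.range r → p.2 ∈ Set.range c →
        q.1 ∈ Set.range c → q.2 ∈ Set.range r → False := by
  intro l
  induction l with
  | nil => intro F _ p hp; simp at hp
  | cons a rest ih =>
    obtain ⟨v, u⟩ := a
    intro F hval p hp q hq hp1 hp2 hq1 hq2
    simp only [ValidSeq] at hval
    obtain ⟨⟨hvF, huF, hadjvu, hrule⟩, hsrc, hvalrest⟩ := hval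
    rcases List.mem_cons.mp hp with hph | hpr
    · subst hph
      rcases List.mem_cons.mp hq with hqh | hqr
      · -- p = q = (v,u): v both a row and a column
        subst hqh
        obtain ⟨i, hi⟩ := hp1
        obtain ⟨j, hj⟩ := hq1
        exact hdisj i j (by rw [hi, hj])
      · -- head is row→col, q in rest is col→row
        have hq2' : q.2 ∉ insert u F := validSeq_snd_not_mem _ _ hvalrest q hqr
        have hne : v ≠ q.2 := fun h => hq2' (Set.mem_insert_of_mem _ (h ▸ hvF))
        have hAdj : G.Adj v q.2 := hrc hp1 hq2 hne
        have heq : q.2 = u := hrule q.2 hAdj (fun h => hq2' (Set.mem_insert_of_mem _ h))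
        exact hq2' (by rw [heq]; exact Set.mem_insert _ _)
    · rcases List.mem_cons.mp hq with hqh | hqr
      · -- head is col→row, p in rest is row→col
        subst hqh
        have hp2' : p.2 ∉ insert u F := validSeq_snd_not_mem _ _ hvalrest p hpr
        have hne : v ≠ p.2 := fun h => hp2' (Set.mem_insert_of_mem _ (h ▸ hvF))
        have hAdj : G.Adj v p.2 := hcc hq1 hp2 hne
        have heq : p.2 = u := hrule p.2 hAdj (fun h => hp2' (Set.mem_insert_of_mem _ h))
        exact hp2' (by rw [heq]; exact Set.mem_insert _ _)
      · exact ih (insert u F) hvalrest p hpr q hqr hp1 hp2 hq1 hq2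

/-- Any valid forcing sequence on the saturated cobipartite graph yields a triangle
of size the length of the sequence. -/
private lemma lemE {G : SimpleGraph V} {m n : ℕ} {Y : Fin m → Fin n → Prop}
    {r : Fin m → V} {c : Fin n → V}
    (hadj : ∀ i j, G.Adj (r i) (c j) ↔ Y i j)
    (hrc : G.IsClique (Set.range r))
    (hcc : G.IsClique (Set.range c))
    (hdisj : ∀ i j, r i ≠ c j)
    (hcov : ∀ v : V, v ∈ Set.range r ∨ v ∈ Set.range c)
    (hsat1 : ∀ i, ∃ j, G.Adj (r i) (c j))
    (hsat2 : ∀ j, ∃ i, G.Adj (r i) (c j))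
    (l : List (V × V)) (F : Set V) (hval : ValidSeq (StdForce G) l F) :
    HasTriOfSize Y l.length := by
  by_cases hex : ∃ q ∈ l, q.1 ∈ Set.range c ∧ q.2 ∈ Set.range r
  · -- transpose case
    obtain ⟨q, hq, hq1, hq2⟩ := hex
    have hnorc : ∀ p ∈ l, ¬ (p.1 ∈ Set.range r ∧ p.2 ∈ Set.range c) := by
      intro p hp ⟨h1, h2⟩
      exact lemD hrc hcc hdisj l F hval p hp q hq h1 h2 hq1 hq2
    have hadj' : ∀ j i, G.Adj (c j) (r i) ↔ (fun (j : Fin n) (i : Fin m) => Y i j) j i := by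
      intro j i
      rw [G.adj_comm]
      exact hadj i j
    obtain ⟨pl, hlen, hdiag, hpw⟩ :=
      lemB hadj' hcc hrc (fun v => (hcov v).symm)
        (fun j => (hsat2 j).imp (fun i hi => hi.symm))
        (fun i => (hsat1 i).imp (fun j hj => hj.symm)) l F hval hnorc
    have := hasTri_of_pairs (fun (j : Fin n) (i : Fin m) => Y i j) pl hdiag hpw
    rw [hlen] at this
    exact hasTri_flip Y l.length this
  · push_neg at hex
    have hnocr : ∀ p ∈ l, ¬ (p.1 ∈ Set.range c ∧ p.2 ∈ Set.range r) := by
      intro p hp ⟨h1, h2⟩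
      exact (hex p hp h1) h2
    obtain ⟨pl, hlen, hdiag, hpw⟩ := lemB hadj hrc hcc hcov hsat1 hsat2 l F hval hnocr
    have := hasTri_of_pairs _ pl hdiag hpw
    rwa [hlen] at this

end AuxProof4

section AuxProof5

private lemma rank_submatrix_le' {l o m' n' : Type*} [Fintype l] [Fintype o]
    [Fintype m'] [Fintype n'] [DecidableEq m'] [DecidableEq n'] {𝔽 : Type*} [Field 𝔽]
    (A : Matrix m' n' 𝔽) (f : l → m') (g : o → n') :
    (A.submatrix f g).rank ≤ A.rank := by
  have h1 : ((1 : Matrix m' m' 𝔽).submatrix f (Equiv.refl m')) * A = A.submatrix f id := by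
    rw [Matrix.one_submatrix_mul]
    rfl
  have h2 : (A.submatrix f id) * ((1 : Matrix n' n' 𝔽).submatrix (Equiv.refl n') g)
      = A.submatrix f g := by
    rw [Matrix.mul_submatrix_one]
    rfl
  calc (A.submatrix f g).rank
      = ((A.submatrix f id) * ((1 : Matrix n' n' 𝔽).submatrix (Equiv.refl n') g)).rank := by
        rw [h2]
    _ ≤ (A.submatrix f id).rank := Matrix.rank_mul_le_left _ _
    _ = (((1 : Matrix m' m' 𝔽).submatrix f (Equiv.refl m')) * A).rank := by rw [h1]
    _ ≤ A.rank := Matrix.rank_mul_le_right _ _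

end AuxProof5


/-- Over any field `𝔽`, if `G` is the saturated cobipartite graph
associated with `Y` and `M(G) = Z(G)` over `𝔽`, then `mr_𝔽(Y) = tri(Y)`. -/
theorem mr_eq_tri_of_M_eq_Z
    {V : Type*} [Fintype V] [DecidableEq V] (𝔽 : Type*) [Field 𝔽] {m n : ℕ}
    (Y : Fin m → Fin n → Prop) (G : SimpleGraph V) (r : Fin m → V) (c : Fin n → V)
    (hassoc : CobipAssociated G Y r c)
    (hsat1 : ∀ i, ∃ j, G.Adj (r i) (c j)) (hsat2 : ∀ j, ∃ i, G.Adj (r i) (c j))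
    (hMZ : Mnum 𝔽 G = Z G) :
    mr 𝔽 Y = tri Y := by
    classical
  obtain ⟨⟨hrinj, hcinj, hdisj, hcov, hadjY⟩, hrc, hcc⟩ := hassoc
  have hdisjs : Disjoint (Set.range r) (Set.range c) := by
    rw [Set.disjoint_left]
    rintro _ ⟨i, rfl⟩ ⟨j, hj⟩
    exact hdisj i j hj.symm
  have huniv : Set.range r ∪ Set.range c = Set.univ := by
    ext v
    simp only [Set.mem_univ, iff_true, Set.mem_union]
    exact hcov v
  have hcardV : Fintype.card V = m + n := by
    have h1 : (Set.range r).ncard = m := by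
      rw [← Set.image_univ, Set.ncard_image_of_injective _ hrinj, Set.ncard_univ,
        Nat.card_eq_fintype_card, Fintype.card_fin]
    have h2 : (Set.range c).ncard = n := by
      rw [← Set.image_univ, Set.ncard_image_of_injective _ hcinj, Set.ncard_univ,
        Nat.card_eq_fintype_card, Fintype.card_fin]
    calc Fintype.card V = (Set.univ : Set V).ncard := by
          rw [Set.ncard_univ, Nat.card_eq_fintype_card]
      _ = (Set.range r ∪ Set.range c).ncard := by rw [huniv]
      _ = m + n := by
          rw [Set.ncard_union_eq hdisjs (Set.toFinite _) (Set.toFinite _), h1, h2]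
  have htri0 : HasTriOfSize Y 0 :=
    ⟨Fin.elim0, Fin.elim0, fun a => a.elim0, fun a => a.elim0, fun a => a.elim0,
      fun a => a.elim0⟩
  have htribdd : BddAbove {k | HasTriOfSize Y k} := by
    refine ⟨m, fun k hk => ?_⟩
    obtain ⟨ρ, _, hρ, _, _, _⟩ := hk
    simpa using Fintype.card_le_of_injective ρ hρ
  -- mr is attained
  have hmrne : {k | ∃ A : Matrix (Fin m) (Fin n) 𝔽,
      (∀ i j, A i j ≠ 0 ↔ Y i j) ∧ A.rank = k}.Nonempty := by
    refine ⟨_, Matrix.of (fun i j => if Y i j then (1 : 𝔽) else 0), fun i j => ?_, rfl⟩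
    by_cases h : Y i j <;> simp [h]
  obtain ⟨Amr, hAmr, hAmrrank⟩ :
      ∃ A : Matrix (Fin m) (Fin n) 𝔽, (∀ i j, A i j ≠ 0 ↔ Y i j) ∧ A.rank = mr 𝔽 Y :=
    Nat.sInf_mem hmrne
  -- Step A : tri ≤ mr
  have htrine : {k | HasTriOfSize Y k}.Nonempty := ⟨0, htri0⟩
  have hstepA : tri Y ≤ mr 𝔽 Y := by
    apply csSup_le htrine
    intro k hk
    obtain ⟨ρ, γ, hρ, hγ, hdiag, hzero⟩ := hk
    have hBtri : (Amr.submatrix ρ γ).BlockTriangular OrderDual.toDual := by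
      intro i j hij
      by_contra h
      exact hzero i j hij ((hAmr _ _).mp h)
    have hdet : (Amr.submatrix ρ γ).det ≠ 0 := by
      rw [Matrix.det_of_lowerTriangular _ hBtri]
      apply Finset.prod_ne_zero_iff.mpr
      intro i _
      exact (hAmr (ρ i) (γ i)).mpr (hdiag i)
    have hrankB : (Amr.submatrix ρ γ).rank = k := by
      rw [Matrix.rank_of_isUnit _ ((Matrix.isUnit_iff_isUnit_det _).mpr hdet.isUnit),
        Fintype.card_fin]
    calc k = (Amr.submatrix ρ γ).rank := hrankB.symm
      _ ≤ Amr.rank := rank_submatrix_le' _ _ _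
      _ = mr 𝔽 Y := hAmrrank
  -- Z is attained
  have hZne : {k | ∃ F : Set V, IsZFSet (StdForce G) F ∧ F.ncard = k}.Nonempty := by
    refine ⟨(Set.univ : Set V).ncard, Set.univ, ⟨[], by simp [ValidSeq], ?_⟩, rfl⟩
    ext v
    simp [filledAfter, targetsOf]
  obtain ⟨F, ⟨seq, hvalid, hfill⟩, hFcard⟩ :
      ∃ F : Set V, IsZFSet (StdForce G) F ∧ F.ncard = Z G :=
    Nat.sInf_mem hZne
  have htriseq : HasTriOfSize Y seq.length :=
    lemE hadjY hrc hcc hdisj hcov hsat1 hsat2 seq F hvalid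
  have hseqtri : seq.length ≤ tri Y :=
    le_csSup htribdd (show seq.length ∈ {k | HasTriOfSize Y k} from htriseq)
  have hcount : Fintype.card V ≤ F.ncard + seq.length := by
    have h2 : targetsOf seq = ((seq.map Prod.snd).toFinset : Set V) := by
      ext u
      simp [targetsOf, List.mem_map, eq_comm]
    have h3 : (targetsOf seq).ncard ≤ seq.length := by
      rw [h2, Set.ncard_coe_finset]
      exact (List.toFinset_card_le _).trans (by simp)
    calc Fintype.card V = (Set.univ : Set V).ncard := by
          rw [Set.ncard_univ, Nat.card_eq_fintype_card]
      _ = (F ∪ targetsOf seq).ncard := by rw [← hfill]; rfl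
      _ ≤ F.ncard + (targetsOf seq).ncard := Set.ncard_union_le _ _
      _ ≤ F.ncard + seq.length := by omega
  -- Mnum is attained
  have hSMne : {k | ∃ A : Matrix V V 𝔽, A.IsSymm ∧
      (∀ i j : V, i ≠ j → (A i j ≠ 0 ↔ G.Adj i j)) ∧
      k = Fintype.card V - A.rank}.Nonempty := by
    refine ⟨_, Matrix.of (fun i j => if G.Adj i j then (1 : 𝔽) else 0), ?_, ?_, rfl⟩
    · show _ = _
      ext i j
      simp only [Matrix.transpose_apply, Matrix.of_apply]
      rw [G.adj_comm]
    · intro i j hij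
      by_cases h : G.Adj i j <;> simp [h]
  have hSMbdd : BddAbove {k | ∃ A : Matrix V V 𝔽, A.IsSymm ∧
      (∀ i j : V, i ≠ j → (A i j ≠ 0 ↔ G.Adj i j)) ∧
      k = Fintype.card V - A.rank} := by
    refine ⟨Fintype.card V, ?_⟩
    rintro k ⟨A, -, -, rfl⟩
    omega
  obtain ⟨AG, hAGsymm, hAGpat, hAGk⟩ :
      ∃ A : Matrix V V 𝔽, A.IsSymm ∧ (∀ i j : V, i ≠ j → (A i j ≠ 0 ↔ G.Adj i j)) ∧
        Mnum 𝔽 G = Fintype.card V - A.rank :=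
    Nat.sSup_mem hSMne hSMbdd
  have hAGrankle : AG.rank ≤ Fintype.card V := Matrix.rank_le_card_width AG
  have hBpat : ∀ i j, (AG.submatrix r c) i j ≠ 0 ↔ Y i j := by
    intro i j
    rw [← hadjY i j]
    exact hAGpat (r i) (c j) (hdisj i j)
  have hmrle : mr 𝔽 Y ≤ (AG.submatrix r c).rank := Nat.sInf_le ⟨AG.submatrix r c, hBpat, rfl⟩
  have hsub : (AG.submatrix r c).rank ≤ AG.rank := rank_submatrix_le' _ _ _
  refine le_antisymm ?_ hstepA
  omega
end
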